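/- (Scaling Theorem) Let f be a differentiable function on ℝ and let T(x) = a·x + b be an affine map with a ≠ 0. Then for every x ∈ ℝ with f′(x) ≠ 0, one has T(M_{f∘T}(T⁻¹(x))) = M_f(x). -/

import Mathlib

/-- The classical Newton approximation function `N_f(x) = x - f(x)/f'(x)`. -/
noncomputable def newtonFun (f : ℝ → ℝ) (x : ℝ) : ℝ :=
  x - f x / deriv f x

/-- The modified Newton approximation function
`M_f(x) = N_f(x) - f(N_f(x))/f'(x)`. -/
noncomputable def modNewtonFun (f : ℝ → ℝ) (x : ℝ) : ℝ :=
  newtonFun f x - f (newtonFun f x) / deriv f x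

lemma deriv_comp_affine (f : ℝ → ℝ) (hf : Differentiable ℝ f) (a b y : ℝ) :
    deriv (fun y => f (a * y + b)) y = a * deriv f (a * y + b) := by
  have h : HasDerivAt (fun y => a * y + b) a y := by
    simpa using ((hasDerivAt_id y).const_mul a).add_const b
  have := ((hf (a * y + b)).hasDerivAt.comp y h).deriv
  exact this.trans (mul_comm _ _)

/-- **Scaling Theorem.** If `f` is differentiable on `ℝ` and `T(x) = a·x + b`
with `a ≠ 0`, then `T ∘ M_{f∘T} ∘ T⁻¹ = M_f` at every point where `f' ≠ 0`. -/
theorem modNewtonFun_scaling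
    (f : ℝ → ℝ) (hf : Differentiable ℝ f)
    (a b : ℝ) (ha : a ≠ 0)
    (x : ℝ) (hx : deriv f x ≠ 0) :
    a * modNewtonFun (fun y => f (a * y + b)) ((x - b) / a) + b =
      modNewtonFun f x := by
  set y := (x - b) / a with hy
  have hxy : a * y + b = x := by rw [hy, mul_div_assoc', mul_div_cancel_left₀ _ ha]; ring
  have hd : deriv (fun y => f (a * y + b)) y = a * deriv f x := by
    rw [deriv_comp_affine f hf, hxy]
  have key : ∀ c : ℝ, a * (c / (a * deriv f x)) = c / deriv f x := fun c => by
    rw [mul_div_assoc', mul_div_mul_left _ _ ha]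
  have hN : a * newtonFun (fun y => f (a * y + b)) y + b = newtonFun f x := by
    simp only [newtonFun, hd, hxy, mul_sub, key]
    linear_combination hxy
  simp only [modNewtonFun, hd, mul_sub, key]
  rw [show a * newtonFun (fun y => f (a * y + b)) y -
      f (a * newtonFun (fun y => f (a * y + b)) y + b) / deriv f x + b
      = (a * newtonFun (fun y => f (a * y + b)) y + b) -
      f (a * newtonFun (fun y => f (a * y + b)) y + b) / deriv f x by ring,
    hN]
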